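/- Let g : [−1, 1] → ℝ be continuously differentiable and odd (g(−t) = −g(t) for all t ∈ [−1, 1]). Then ∫_{−1}^{1} ((1 − t²)·g'(t)² + g(t)²) dt ≥ 3·∫_{−1}^{1} g(t)² dt. -/

import Mathlib

open Real intervalIntegral

set_option maxHeartbeats 1000000

lemma segment_bound (g φ : ℝ → ℝ)
    (hgc : ContinuousOn g (Set.Icc (-1) 1))
    (hφc : ContinuousOn φ (Set.Icc (-1) 1))
    (hderiv : ∀ t ∈ Set.Ioo (-1:ℝ) 1, HasDerivAt g (φ t) t)
    (a b : ℝ) (ha : -1 ≤ a) (hb : b ≤ 1) (hab : a ≤ b) (h0 : (0:ℝ) ∉ Set.Icc a b) :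
    ((1 - b^2) * g b ^ 2) * b⁻¹ - ((1 - a^2) * g a ^ 2) * a⁻¹ ≤
      ∫ t in a..b, ((1 - t^2) * φ t ^ 2 - 2 * g t ^ 2) := by
  have hsub : Set.Icc a b ⊆ Set.Icc (-1:ℝ) 1 := Set.Icc_subset_Icc ha hb
  have hne : ∀ t ∈ Set.Icc a b, t ≠ 0 := fun t ht h => h0 (h ▸ ht)
  set F : ℝ → ℝ := fun t => ((1 - t^2) * g t ^ 2) * t⁻¹ with hF
  set F' : ℝ → ℝ := fun t =>
    (-(2*t) * g t ^ 2 + (1 - t^2) * (2 * g t ^ 1 * φ t)) * t⁻¹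
      + ((1 - t^2) * g t ^ 2) * (-(t^2)⁻¹) with hF'
  have hgc' : ContinuousOn g (Set.Icc a b) := hgc.mono hsub
  have hφc' : ContinuousOn φ (Set.Icc a b) := hφc.mono hsub
  have hinv : ContinuousOn (fun t : ℝ => t⁻¹) (Set.Icc a b) :=
    ContinuousOn.inv₀ continuousOn_id hne
  have hFc : ContinuousOn F (Set.Icc a b) := by
    apply ContinuousOn.mul _ hinv
    exact ((continuousOn_const.sub (continuousOn_pow 2)).mul (hgc'.pow 2))
  have hF'c : ContinuousOn F' (Set.Icc a b) := by
    apply ContinuousOn.add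
    · apply ContinuousOn.mul _ hinv
      apply ContinuousOn.add
      · exact (continuousOn_const.mul continuousOn_id).neg.mul (hgc'.pow 2)
      · exact (continuousOn_const.sub (continuousOn_pow 2)).mul
          ((continuousOn_const.mul (hgc'.pow 1)).mul hφc')
    · apply ContinuousOn.mul
        ((continuousOn_const.sub (continuousOn_pow 2)).mul (hgc'.pow 2))
      exact (ContinuousOn.inv₀ (continuousOn_pow 2) (fun t ht => pow_ne_zero 2 (hne t ht))).neg
  have hintegrand : ContinuousOn (fun t => (1 - t^2) * φ t ^ 2 - 2 * g t ^ 2) (Set.Icc a b) :=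
    ((continuousOn_const.sub (continuousOn_pow 2)).mul (hφc'.pow 2)).sub
      (continuousOn_const.mul (hgc'.pow 2))
  have hF'int : IntervalIntegrable F' MeasureTheory.volume a b :=
    (hF'c.intervalIntegrable_of_Icc hab)
  have hIint : IntervalIntegrable (fun t => (1 - t^2) * φ t ^ 2 - 2 * g t ^ 2)
      MeasureTheory.volume a b := hintegrand.intervalIntegrable_of_Icc hab
  have hFd : ∀ t ∈ Set.Ioo a b, HasDerivWithinAt F (F' t) (Set.Ioi t) t := by
    intro t ht
    have ht' : t ∈ Set.Ioo (-1:ℝ) 1 :=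
      ⟨lt_of_le_of_lt ha ht.1, lt_of_lt_of_le ht.2 hb⟩
    have htne : t ≠ 0 := hne t ⟨le_of_lt ht.1, le_of_lt ht.2⟩
    have h1 : HasDerivAt (fun t : ℝ => 1 - t^2) (-(2*t)) t := by
      have := ((hasDerivAt_pow 2 t).const_sub (1:ℝ))
      simpa using this
    have h2 : HasDerivAt (fun t => g t ^ 2) (2 * g t ^ 1 * φ t) t := by
      exact_mod_cast (hderiv t ht').pow 2
    have h3 : HasDerivAt (fun t : ℝ => t⁻¹) (-(t^2)⁻¹) t := hasDerivAt_inv htne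
    exact ((h1.mul h2).mul h3).hasDerivWithinAt
  have hFTC : ∫ t in a..b, F' t = F b - F a :=
    integral_eq_sub_of_hasDeriv_right_of_le hab hFc hFd hF'int
  have hmono : ∫ t in a..b, F' t ≤ ∫ t in a..b, ((1 - t^2) * φ t ^ 2 - 2 * g t ^ 2) := by
    apply integral_mono_on hab hF'int hIint
    intro t ht
    have htne : t ≠ 0 := hne t ht
    have ht1 : (1:ℝ) - t^2 ≥ 0 := by
      have h1 := (hsub ht).1; have h2 := (hsub ht).2; nlinarith
    have key : (1 - t^2) * φ t ^ 2 - 2 * g t ^ 2 - F' t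
        = (1 - t^2) * (t * φ t - g t)^2 / t^2 := by
      simp only [hF']
      field_simp
      ring
    have hnn : (0:ℝ) ≤ (1 - t^2) * (t * φ t - g t)^2 / t^2 :=
      div_nonneg (mul_nonneg ht1 (sq_nonneg _)) (sq_nonneg t)
    rw [← key] at hnn
    linarith
  calc ((1 - b^2) * g b ^ 2) * b⁻¹ - ((1 - a^2) * g a ^ 2) * a⁻¹
      = ∫ t in a..b, F' t := hFTC.symm
    _ ≤ _ := hmono

/-- Rayleigh quotient bound at `k = 1` in the trigonometric Lamé problem: for every
continuously differentiable odd function `g` on `[−1, 1]`,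
`∫_{−1}^{1} ((1 − t²)·g'(t)² + g(t)²) dt ≥ 3·∫_{−1}^{1} g(t)² dt`; the infimum `3` is
attained by the Legendre polynomial `P₁(t) = t`. -/
theorem legendre_odd_rayleigh_bound
    (g : ℝ → ℝ) (hg : ContDiffOn ℝ 1 g (Set.Icc (-1) 1))
    (hodd : ∀ t ∈ Set.Icc (-1 : ℝ) 1, g (-t) = -g t) :
    ∫ t in (-1 : ℝ)..1, ((1 - t ^ 2) * deriv g t ^ 2 + g t ^ 2) ≥
      3 * ∫ t in (-1 : ℝ)..1, g t ^ 2 := by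
  have hIcc : UniqueDiffOn ℝ (Set.Icc (-1:ℝ) 1) := uniqueDiffOn_Icc (by norm_num)
  set φ : ℝ → ℝ := derivWithin g (Set.Icc (-1) 1) with hφ
  have hgc : ContinuousOn g (Set.Icc (-1:ℝ) 1) := hg.continuousOn
  have hφc : ContinuousOn φ (Set.Icc (-1:ℝ) 1) :=
    hg.continuousOn_derivWithin hIcc le_rfl
  have hderiv : ∀ t ∈ Set.Ioo (-1:ℝ) 1, HasDerivAt g (φ t) t := by
    intro t ht
    exact ((hg.differentiableOn one_ne_zero t (Set.Ioo_subset_Icc_self ht)).hasDerivWithinAt).hasDerivAt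
      (Icc_mem_nhds ht.1 ht.2)
  have h0mem : (0:ℝ) ∈ Set.Icc (-1:ℝ) 1 := by norm_num
  have hg0 : g 0 = 0 := by have := hodd 0 h0mem; simp at this; linarith
  obtain ⟨C, hC⟩ := isCompact_Icc.exists_bound_of_continuousOn hφc
  have hC0 : 0 ≤ C := le_trans (norm_nonneg _) (hC 0 h0mem)
  have hLip : ∀ x ∈ Set.Icc (-1:ℝ) 1, |g x| ≤ C * |x| := by
    intro x hx
    have := (convex_Icc (-1:ℝ) 1).norm_image_sub_le_of_norm_derivWithin_le
      (hg.differentiableOn one_ne_zero) hC h0mem hx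
    simpa [hg0] using this
  set f1 : ℝ → ℝ := fun t => (1 - t^2) * φ t ^ 2 - 2 * g t ^ 2 with hf1
  have hf1c : ContinuousOn f1 (Set.Icc (-1:ℝ) 1) :=
    ((continuousOn_const.sub (continuousOn_pow 2)).mul (hφc.pow 2)).sub
      (continuousOn_const.mul (hgc.pow 2))
  have hf1int : ∀ a b : ℝ, a ∈ Set.Icc (-1:ℝ) 1 → b ∈ Set.Icc (-1:ℝ) 1 →
      IntervalIntegrable f1 MeasureTheory.volume a b := by
    intro a b ha hb
    rcases le_total a b with h | h
    · exact ((hf1c.mono (Set.Icc_subset_Icc ha.1 hb.2)).intervalIntegrable_of_Icc h)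
    · exact ((hf1c.mono (Set.Icc_subset_Icc hb.1 ha.2)).intervalIntegrable_of_Icc h).symm
  set I : ℝ := ∫ t in (-1:ℝ)..1, f1 t with hI
  have hInn : 0 ≤ I := by
    by_contra hneg
    push_neg at hneg
    set ε : ℝ := min (1/2) ((-I)/(8*C^2+1)) with hε
    have hεpos : 0 < ε := lt_min (by norm_num) (div_pos (by linarith) (by positivity))
    have hε1 : ε < 1 := lt_of_le_of_lt (min_le_left _ _) (by norm_num)
    -- split
    have hsplit : I = (∫ t in (-1:ℝ)..(-ε), f1 t) + (∫ t in (-ε:ℝ)..ε, f1 t)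
        + (∫ t in (ε:ℝ)..1, f1 t) := by
      have m1 : (-ε:ℝ) ∈ Set.Icc (-1:ℝ) 1 := ⟨by linarith, by linarith⟩
      have m2 : (ε:ℝ) ∈ Set.Icc (-1:ℝ) 1 := ⟨by linarith, by linarith⟩
      have m3 : (-1:ℝ) ∈ Set.Icc (-1:ℝ) 1 := ⟨le_rfl, by norm_num⟩
      have m4 : (1:ℝ) ∈ Set.Icc (-1:ℝ) 1 := ⟨by norm_num, le_rfl⟩
      have e1 : (∫ t in (-1:ℝ)..(-ε), f1 t) + (∫ t in (-ε:ℝ)..ε, f1 t)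
          = ∫ t in (-1:ℝ)..ε, f1 t :=
        intervalIntegral.integral_add_adjacent_intervals (hf1int _ _ m3 m1) (hf1int _ _ m1 m2)
      have e2 : (∫ t in (-1:ℝ)..ε, f1 t) + (∫ t in (ε:ℝ)..1, f1 t)
          = ∫ t in (-1:ℝ)..1, f1 t :=
        intervalIntegral.integral_add_adjacent_intervals (hf1int _ _ m3 m2) (hf1int _ _ m2 m4)
      rw [hI, ← e2, ← e1]
    -- right piece
    have hgε : |g ε| ≤ C * ε := by
      have := hLip ε ⟨by linarith, le_of_lt hε1⟩
      rwa [abs_of_pos hεpos] at this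
    have hgnε : |g (-ε)| ≤ C * ε := by
      have := hLip (-ε) ⟨by linarith, by linarith⟩
      rwa [abs_neg, abs_of_pos hεpos] at this
    have hright : -(C^2*ε) ≤ ∫ t in (ε:ℝ)..1, f1 t := by
      have h := segment_bound g φ hgc hφc hderiv ε 1 (by linarith) le_rfl (le_of_lt hε1)
        (by intro h; exact absurd h.1 (by simpa using not_le.2 hεpos))
      have h1 : ((1 - (1:ℝ)^2) * g 1 ^ 2) * (1:ℝ)⁻¹ = 0 := by norm_num
      have hb : ((1 - ε^2) * g ε ^ 2) * ε⁻¹ ≤ C^2 * ε := by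
        have hg2 : g ε ^ 2 ≤ C^2 * ε^2 := by nlinarith [abs_nonneg (g ε), sq_abs (g ε), sq_abs ε]
        have hinv : (0:ℝ) ≤ ε⁻¹ := by positivity
        have h2 : ((1 - ε^2) * g ε ^ 2) ≤ C^2 * ε^2 := by nlinarith [sq_nonneg (g ε)]
        calc ((1 - ε^2) * g ε ^ 2) * ε⁻¹ ≤ (C^2 * ε^2) * ε⁻¹ :=
              mul_le_mul_of_nonneg_right h2 hinv
          _ = C^2 * ε := by field_simp
      rw [h1] at h
      linarith
    have hleft : -(C^2*ε) ≤ ∫ t in (-1:ℝ)..(-ε), f1 t := by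
      have h := segment_bound g φ hgc hφc hderiv (-1) (-ε) le_rfl (by linarith) (by linarith)
        (by intro h; exact absurd h.2 (by simpa using not_le.2 hεpos))
      have h1 : ((1 - (-1:ℝ)^2) * g (-1) ^ 2) * (-1:ℝ)⁻¹ = 0 := by norm_num
      have hb : -(C^2 * ε) ≤ ((1 - (-ε)^2) * g (-ε) ^ 2) * (-ε)⁻¹ := by
        have hg2 : g (-ε) ^ 2 ≤ C^2 * ε^2 := by
          nlinarith [abs_nonneg (g (-ε)), sq_abs (g (-ε)), sq_abs ε]
        have hinv : (0:ℝ) ≤ ε⁻¹ := by positivity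
        have h2 : ((1 - (-ε)^2) * g (-ε) ^ 2) ≤ C^2 * ε^2 := by nlinarith [sq_nonneg (g (-ε))]
        have h3 : ((1 - (-ε)^2) * g (-ε) ^ 2) * (-ε)⁻¹
            = -(((1 - (-ε)^2) * g (-ε) ^ 2) * ε⁻¹) := by
          rw [inv_neg]; ring
        rw [h3]
        have h4 : ((1 - (-ε)^2) * g (-ε) ^ 2) * ε⁻¹ ≤ (C^2 * ε^2) * ε⁻¹ :=
          mul_le_mul_of_nonneg_right h2 hinv
        have h5 : (C^2 * ε^2) * ε⁻¹ = C^2 * ε := by field_simp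
        nlinarith [mul_nonneg (mul_nonneg (by nlinarith : (0:ℝ) ≤ 1 - (-ε)^2) (sq_nonneg (g (-ε)))) hinv]
      rw [h1] at h
      linarith
    have hmid : -(6*C^2*ε) ≤ ∫ t in (-ε:ℝ)..ε, f1 t := by
      have hb : ∀ x ∈ Set.uIoc (-ε:ℝ) ε, ‖f1 x‖ ≤ 3*C^2 := by
        intro x hx
        rw [Set.uIoc_of_le (by linarith : (-ε:ℝ) ≤ ε)] at hx
        have hx' : x ∈ Set.Icc (-1:ℝ) 1 := ⟨by linarith [hx.1], by linarith [hx.2]⟩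
        have hφx : |φ x| ≤ C := hC x hx'
        have hgx : |g x| ≤ C := by
          have := hLip x hx'
          have : C * |x| ≤ C * 1 := by
            apply mul_le_mul_of_nonneg_left _ hC0
            rw [abs_le]; exact ⟨hx'.1, hx'.2⟩
          linarith [hLip x hx']
        have h1x : |1 - x^2| ≤ 1 := by
          rw [abs_le]; constructor <;> nlinarith [hx'.1, hx'.2]
        rw [hf1]
        have : |(1 - x^2) * φ x ^ 2 - 2 * g x ^ 2| ≤ |(1 - x^2) * φ x ^ 2| + |2 * g x ^ 2| :=
          abs_sub _ _
        have e1 : |(1 - x^2) * φ x ^ 2| ≤ C^2 := by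
          rw [abs_mul, abs_pow]
          nlinarith [abs_nonneg (1 - x^2), abs_nonneg (φ x), sq_nonneg (|φ x|)]
        have e2 : |2 * g x ^ 2| ≤ 2*C^2 := by
          rw [abs_mul, abs_pow]
          have : |g x|^2 ≤ C^2 := by nlinarith [abs_nonneg (g x)]
          simp only [abs_two]
          nlinarith
        calc ‖(1 - x^2) * φ x ^ 2 - 2 * g x ^ 2‖
            = |(1 - x^2) * φ x ^ 2 - 2 * g x ^ 2| := rfl
          _ ≤ |(1 - x^2) * φ x ^ 2| + |2 * g x ^ 2| := this
          _ ≤ 3*C^2 := by linarith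
      have := intervalIntegral.norm_integral_le_of_norm_le_const hb
      have habs : |ε - (-ε)| = 2*ε := by rw [abs_of_pos (by linarith)]; ring
      rw [habs] at this
      have := abs_le.1 this
      linarith [this.1]
    have hsum : -(8*C^2*ε) ≤ I := by rw [hsplit]; linarith
    have hεle : ε * (8*C^2+1) ≤ -I := by
      have h1 : ε ≤ (-I)/(8*C^2+1) := min_le_right _ _
      rw [le_div_iff₀ (by positivity)] at h1
      linarith
    have hexp : ε * (8*C^2+1) = 8*C^2*ε + ε := by ring
    linarith
  -- final assembly
  have hcongr : ∫ t in (-1:ℝ)..1, ((1 - t ^ 2) * deriv g t ^ 2 + g t ^ 2)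
      = ∫ t in (-1:ℝ)..1, ((1 - t ^ 2) * φ t ^ 2 + g t ^ 2) := by
    apply intervalIntegral.integral_congr_ae
    have hne1 : ∀ᵐ (x:ℝ), x ≠ (1:ℝ) := by
      rw [MeasureTheory.ae_iff]
      have : {x : ℝ | ¬ x ≠ 1} = {1} := by ext x; simp [not_not]
      rw [this]
      exact Real.volume_singleton
    filter_upwards [hne1] with x hx hxm
    rw [Set.uIoc_of_le (by norm_num : (-1:ℝ) ≤ 1)] at hxm
    have hxo : x ∈ Set.Ioo (-1:ℝ) 1 := ⟨hxm.1, lt_of_le_of_ne hxm.2 hx⟩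
    rw [(hderiv x hxo).deriv]
  have hg2c : ContinuousOn (fun t : ℝ => 3 * g t ^ 2) (Set.Icc (-1:ℝ) 1) :=
    continuousOn_const.mul (hgc.pow 2)
  have hadd : ∫ t in (-1:ℝ)..1, ((1 - t ^ 2) * φ t ^ 2 + g t ^ 2)
      = (∫ t in (-1:ℝ)..1, f1 t) + ∫ t in (-1:ℝ)..1, 3 * g t ^ 2 := by
    rw [← intervalIntegral.integral_add (hf1int (-1) 1 ⟨le_rfl, by norm_num⟩ ⟨by norm_num, le_rfl⟩)
      (hg2c.intervalIntegrable_of_Icc (by norm_num))]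
    apply intervalIntegral.integral_congr
    intro x _
    simp only [hf1]
    ring
  have h3 : ∫ t in (-1:ℝ)..1, 3 * g t ^ 2 = 3 * ∫ t in (-1:ℝ)..1, g t ^ 2 :=
    intervalIntegral.integral_const_mul 3 _
  rw [hcongr, hadd, h3]
  linarith [hInn]
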